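/- Let f_12, f_13 ∈ 𝓕 and let g_23 be the case-2 virtual interaction they induce. Although g_23 itself need not lie in 𝓕, for every f ∈ 𝓕 the sum f + g_23 lies in 𝓕. -/

import Mathlib

open Set Filter Topology MeasureTheory Matrix Function

attribute [local instance] Classical.propDecidable

noncomputable section

/-- `f̃(d) = d * f(d)`. -/
def tildeFn (f : ℝ → ℝ) : ℝ → ℝ := fun d => d * f d

/-- Membership in the class `𝓕` of monotone interaction laws:
`f` is `C¹` on `ℝ₊ = (0,∞)`, `f̃′ > 0` on `ℝ₊`, `f̃` has a zero, and
`∫_d^1 f̃(x) dx → −∞` as `d → 0⁺`. -/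
def MemF (f : ℝ → ℝ) : Prop :=
  ContDiffOn ℝ 1 f (Set.Ioi 0) ∧
  (∀ d > (0:ℝ), 0 < deriv (tildeFn f) d) ∧
  (∃ d > (0:ℝ), tildeFn f d = 0) ∧
  Tendsto (fun d => ∫ x in d..(1:ℝ), tildeFn f x) (𝓝[>] (0:ℝ)) atBot

/-- The space `C¹(ℝ₊, ℝ)`. -/
def C1Pos : Type := {f : ℝ → ℝ // ContDiffOn ℝ 1 f (Set.Ioi 0)}

/-- The Whitney `C¹`-topology on `C¹(ℝ₊, ℝ)`, generated by the basic open sets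
`B_δ(f) = {g : |g(d) − f(d)| + |g′(d) − f′(d)| < δ(d) for all d > 0}`. -/
instance : TopologicalSpace C1Pos :=
  TopologicalSpace.generateFrom
    { S | ∃ (f : C1Pos) (δ : ℝ → ℝ), ContinuousOn δ (Set.Ioi 0) ∧ (∀ d > (0:ℝ), 0 < δ d) ∧
        S = { g : C1Pos | ∀ d > (0:ℝ), |g.1 d - f.1 d| + |deriv g.1 d - deriv f.1 d| < δ d } }

/-- The class `𝓕` as a topological space (subspace of `C¹(ℝ₊,ℝ)`). -/
def FF : Type := {f : C1Pos // MemF f.1}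

instance : TopologicalSpace FF := instTopologicalSpaceSubtype

/-- `G` is a triangulated Laman graph: there is a Henneberg-type construction order
(a relabeling `σ`) starting from the edge between the first two vertices, in which every
later vertex is joined to exactly two earlier, adjacent, vertices. -/
def IsTLG {N : ℕ} (G : SimpleGraph (Fin N)) : Prop :=
  2 ≤ N ∧
  ∃ (σ : Equiv.Perm (Fin N)) (par₁ par₂ : Fin N → Fin N),
    (∀ k : Fin N, 2 ≤ (k : ℕ) →
      ((par₁ k : ℕ) < (k : ℕ) ∧ (par₂ k : ℕ) < (k : ℕ) ∧ par₁ k ≠ par₂ k ∧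
        G.Adj (σ (par₁ k)) (σ (par₂ k)))) ∧
    (∀ i j : Fin N, G.Adj (σ i) (σ j) ↔
      (((i : ℕ) = 0 ∧ (j : ℕ) = 1) ∨ ((i : ℕ) = 1 ∧ (j : ℕ) = 0) ∨
       (2 ≤ (i : ℕ) ∧ (j = par₁ i ∨ j = par₂ i)) ∨
       (2 ≤ (j : ℕ) ∧ (i = par₁ j ∨ i = par₂ j))))

/-- Euclidean distance on `ℝ²` (coordinates `(a,b)`). -/
def dist2 (x y : ℝ × ℝ) : ℝ := Real.sqrt ((x.1 - y.1)^2 + (x.2 - y.2)^2)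

/-- `p` belongs to the configuration space `P`: no collision of adjacent agents. -/
def InConfigSpace {N : ℕ} (G : SimpleGraph (Fin N)) (p : Fin N → ℝ × ℝ) : Prop :=
  ∀ i j, G.Adj i j → p i ≠ p j

/-- `p` is an equilibrium of the RMA system `ẋᵢ = Σ_{j : (i,j) ∈ E} f_ij(d_ij)(x_j − x_i)`. -/
def IsEquilibrium {N : ℕ} (G : SimpleGraph (Fin N)) (f : Fin N → Fin N → ℝ → ℝ)
    (p : Fin N → ℝ × ℝ) : Prop :=
  ∀ i, (∑ j, if G.Adj i j then (f i j (dist2 (p i) (p j))) • (p j - p i) else (0:ℝ×ℝ)) = 0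

/-- The potential function `Φ(p) = Σ_{(i,j) ∈ E} ∫_1^{d_ij} x f_ij(x) dx`
(each edge counted once; the factor 1/2 compensates the double count over ordered pairs). -/
def potential {N : ℕ} (G : SimpleGraph (Fin N)) (f : Fin N → Fin N → ℝ → ℝ)
    (p : Fin N → ℝ × ℝ) : ℝ :=
  (1/2) * ∑ i, ∑ j, if G.Adj i j then ∫ x in (1:ℝ)..(dist2 (p i) (p j)), x * f i j x else 0

/-- Coordinate directions on the configuration space, in the order `(a₁,…,a_N,b₁,…,b_N)`. -/
def basisVec {N : ℕ} : (Fin N ⊕ Fin N) → (Fin N → ℝ × ℝ) :=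
  Sum.elim (fun i => Pi.single i ((1:ℝ), (0:ℝ))) (fun i => Pi.single i ((0:ℝ), (1:ℝ)))

/-- The Hessian matrix of `Φ` at `p` in the coordinates `(a₁,…,a_N,b₁,…,b_N)`. -/
def hessian {N : ℕ} (Φ : (Fin N → ℝ × ℝ) → ℝ) (p : Fin N → ℝ × ℝ) :
    Matrix (Fin N ⊕ Fin N) (Fin N ⊕ Fin N) ℝ :=
  Matrix.of fun u v => fderiv ℝ (fun q => fderiv ℝ Φ q (basisVec v)) p (basisVec u)

/-- The inertia `𝐧(M) = (n₊(M), n₀(M), n₋(M))` of a real symmetric matrix: the numbers of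
positive, zero, and negative eigenvalues (counted with multiplicity). -/
def inertia {m : Type*} [Fintype m] [DecidableEq m] (M : Matrix m m ℝ) : ℕ × ℕ × ℕ :=
  if h : M.IsHermitian then
    ((Finset.univ.filter fun i => 0 < h.eigenvalues i).card,
     (Finset.univ.filter fun i => h.eigenvalues i = 0).card,
     (Finset.univ.filter fun i => h.eigenvalues i < 0).card)
  else (0, 0, 0)

/-- The number `n₀(M)` of zero eigenvalues of a real symmetric matrix. -/
def n0 {m : Type*} [Fintype m] [DecidableEq m] (M : Matrix m m ℝ) : ℕ := (inertia M).2.1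

/-- The vector-valued sign function. -/
def sgn3 (x : ℝ) : ℕ × ℕ × ℕ :=
  if 0 < x then (1,0,0) else if x = 0 then (0,1,0) else (0,0,1)

/-- `q` lies in the `SE(2)`-orbit of `p` (rigid motions: rotation by `(c,s)` with
`c² + s² = 1` followed by translation by `(vx,vy)`). -/
def sameOrbit {N : ℕ} (p q : Fin N → ℝ × ℝ) : Prop :=
  ∃ c s vx vy : ℝ, c^2 + s^2 = 1 ∧
    ∀ i, q i = (c * (p i).1 - s * (p i).2 + vx, s * (p i).1 + c * (p i).2 + vy)

/-- The interaction laws determined by an ensemble `ω ∈ 𝓕^{|E|}`. -/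
def ensembleLaws {N : ℕ} {G : SimpleGraph (Fin N)} (ω : G.edgeSet → FF) :
    Fin N → Fin N → ℝ → ℝ :=
  fun i j => if h : G.Adj i j then (ω ⟨s(i,j), G.mem_edgeSet.mpr h⟩).1.1 else 0

/-- The line configuration on the `a`-axis with coordinates `a`. -/
def lineConfig {N : ℕ} (a : Fin N → ℝ) : Fin N → ℝ × ℝ := fun i => (a i, 0)

/-- The matrix `F_p` of a line configuration with coordinates `a`: symmetric, zero row sums,
off-diagonal entries `φ_ij(d_ij)` on edges and `0` otherwise. -/
def FMat {N : ℕ} (G : SimpleGraph (Fin N)) (φ : Fin N → Fin N → ℝ → ℝ)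
    (a : Fin N → ℝ) : Matrix (Fin N) (Fin N) ℝ :=
  Matrix.of fun i j =>
    if i = j then -∑ k, (if G.Adj i k then φ i k |a i - a k| else 0)
    else if G.Adj i j then φ i j |a i - a j| else 0

/-- The matrix `d̃F_p`: off-diagonal entries `f̃′_ij(d_ij)` on edges. -/
def dFMat {N : ℕ} (G : SimpleGraph (Fin N)) (f : Fin N → Fin N → ℝ → ℝ)
    (a : Fin N → ℝ) : Matrix (Fin N) (Fin N) ℝ :=
  FMat G (fun i j d => deriv (tildeFn (f i j)) d) a

/-- Case 1 balanced distance: the (generically unique) `d₁₂(d)` with `0 < d₁₂ < d` and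
`f̃₁₂(d₁₂) = f̃₁₃(d − d₁₂)`. -/
def case1d12 (f12 f13 : ℝ → ℝ) (d : ℝ) : ℝ :=
  Classical.epsilon fun t => 0 < t ∧ t < d ∧ tildeFn f12 t = tildeFn f13 (d - t)

/-- The case-1 virtual interaction: `g̃₂₃(d) = f̃₁₂(d₁₂(d))`. -/
def g23Case1 (f12 f13 : ℝ → ℝ) : ℝ → ℝ :=
  fun d => tildeFn f12 (case1d12 f12 f13 d) / d

/-- Case 2 balanced distance: the (generically unique) `d₁₂(d) > 0` with
`f̃₁₂(d₁₂) + f̃₁₃(d₁₂ + d) = 0`. -/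
def case2d12 (f12 f13 : ℝ → ℝ) (d : ℝ) : ℝ :=
  Classical.epsilon fun t => 0 < t ∧ tildeFn f12 t + tildeFn f13 (t + d) = 0

/-- The case-2 virtual interaction: `g̃₂₃(d) = f̃₁₃(d₁₃(d))`, `d₁₃(d) = d₁₂(d) + d`. -/
def g23Case2 (f12 f13 : ℝ → ℝ) : ℝ → ℝ :=
  fun d => tildeFn f13 (case2d12 f12 f13 d + d) / d

/-- The case-3 virtual interaction: case 2 with the roles of agents 2,3 (and `f₁₂`,`f₁₃`)
interchanged. -/
def g23Case3 (f12 f13 : ℝ → ℝ) : ℝ → ℝ := g23Case2 f13 f12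

/-- The virtual interaction between agents 2 and 3 induced by `f₁₂`, `f₁₃`, chosen according
to which of the three aligned agents (at coordinates `a1`, `a2`, `a3`) lies between the
other two. -/
def virtualG (f12 f13 : ℝ → ℝ) (a1 a2 a3 : ℝ) : ℝ → ℝ :=
  if (a2 < a1 ∧ a1 < a3) ∨ (a3 < a1 ∧ a1 < a2) then g23Case1 f12 f13
  else if (a1 < a2 ∧ a2 < a3) ∨ (a3 < a2 ∧ a2 < a1) then g23Case2 f12 f13
  else g23Case3 f12 f13

/-- The interaction laws of the reduced system: vertex `0` (the last Henneberg vertex,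
the paper's vertex 1) is deleted, reduced vertex `i` is original vertex `i+1`, and the law on
the reduced edge `(0,1)` (the paper's edge `(2,3)`) is `f*₂₃ = f₂₃ + g₂₃`. -/
def reducedLaws {n : ℕ} (f : Fin (n+3) → Fin (n+3) → ℝ → ℝ) (g : ℝ → ℝ) :
    Fin (n+2) → Fin (n+2) → ℝ → ℝ :=
  fun i j => if (i = 0 ∧ j = 1) ∨ (i = 1 ∧ j = 0)
    then fun d => f i.succ j.succ d + g d
    else f i.succ j.succ

end

section Chunk1
variable {f : ℝ → ℝ}

lemma memF_contDiffOn (hf : MemF f) : ContDiffOn ℝ 1 (tildeFn f) (Set.Ioi 0) := by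
  have h : ContDiffOn ℝ 1 (fun d : ℝ => d) (Set.Ioi 0) := contDiff_id.contDiffOn
  exact h.mul hf.1

lemma memF_contOn (hf : MemF f) : ContinuousOn (tildeFn f) (Set.Ioi 0) :=
  (memF_contDiffOn hf).continuousOn

lemma memF_strictMono (hf : MemF f) : StrictMonoOn (tildeFn f) (Set.Ioi 0) :=
  strictMonoOn_of_deriv_pos (convex_Ioi 0) (memF_contDiffOn hf).continuousOn
    (by rw [interior_Ioi]; exact fun x hx => hf.2.1 x hx)

lemma memF_diffAt (hf : MemF f) {d : ℝ} (hd : 0 < d) : DifferentiableAt ℝ (tildeFn f) d :=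
  (((memF_contDiffOn hf).differentiableOn one_ne_zero).differentiableAt (Ioi_mem_nhds hd))

lemma memF_contAt (hf : MemF f) {d : ℝ} (hd : 0 < d) : ContinuousAt (tildeFn f) d :=
  (memF_contOn hf).continuousAt (Ioi_mem_nhds hd)

lemma memF_derivContOn (hf : MemF f) : ContinuousOn (deriv (tildeFn f)) (Set.Ioi 0) :=
  (memF_contDiffOn hf).continuousOn_deriv_of_isOpen isOpen_Ioi le_rfl

lemma memF_small (hf : MemF f) (M : ℝ) : ∃ d : ℝ, 0 < d ∧ d < 1 ∧ tildeFn f d < M := by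
  by_contra hcon
  push_neg at hcon
  have hbdd : ∀ d : ℝ, 0 < d → d < 1 → -|M| ≤ ∫ x in d..(1:ℝ), tildeFn f x := by
    intro d hd hd1
    have hsub : Set.uIcc d 1 ⊆ Set.Ioi 0 := by
      rw [Set.uIcc_of_le hd1.le]
      exact fun x hx => lt_of_lt_of_le hd hx.1
    have hint : IntervalIntegrable (tildeFn f) MeasureTheory.volume d 1 :=
      ((memF_contOn hf).mono hsub).intervalIntegrable
    have hintc : IntervalIntegrable (fun _ : ℝ => M) MeasureTheory.volume d 1 :=
      intervalIntegrable_const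
    have hmono : ∫ x in d..(1:ℝ), M ≤ ∫ x in d..(1:ℝ), tildeFn f x := by
      apply intervalIntegral.integral_mono_on hd1.le hintc hint
      intro x hx
      rcases lt_or_eq_of_le hx.2 with h1 | h1
      · exact hcon x (lt_of_lt_of_le hd hx.1) h1
      · -- x = 1 : use monotonicity from points below
        have hd2 : tildeFn f d ≤ tildeFn f x := by
          apply (memF_strictMono hf).monotoneOn (Set.mem_Ioi.2 hd)
            (Set.mem_Ioi.2 (lt_of_lt_of_le hd hx.1)) hx.1
        exact le_trans (hcon d hd hd1) hd2
    rw [intervalIntegral.integral_const, smul_eq_mul] at hmono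
    nlinarith [abs_nonneg M, le_abs_self M, neg_abs_le M]
  have hev : ∀ᶠ d in 𝓝[>] (0:ℝ), (∫ x in d..(1:ℝ), tildeFn f x) < -|M| - 1 :=
    hf.2.2.2.eventually (eventually_lt_atBot _)
  have hev2 : Set.Ioo (0:ℝ) 1 ∈ 𝓝[>] (0:ℝ) :=
    Ioo_mem_nhdsGT_of_mem (by constructor <;> norm_num)
  rcases (hev.and (eventually_of_mem hev2 (fun x hx => hx))).exists with ⟨d, hd1, hd2⟩
  have := hbdd d hd2.1 hd2.2
  linarith

lemma memF_pos_of_gt (hf : MemF f) {z d : ℝ} (hz : 0 < z) (hz0 : tildeFn f z = 0)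
    (hd : z < d) : 0 < tildeFn f d := by
  have := memF_strictMono hf (Set.mem_Ioi.2 hz) (Set.mem_Ioi.2 (hz.trans hd)) hd
  linarith

end Chunk1

section Chunk2
variable {f12 f13 : ℝ → ℝ}

lemma case2_exists (h12 : MemF f12) (h13 : MemF f13) {d : ℝ} (hd : 0 < d) :
    ∃ t : ℝ, 0 < t ∧ tildeFn f12 t + tildeFn f13 (t + d) = 0 := by
  obtain ⟨zh, hzh, hzh0⟩ := h12.2.2.1
  obtain ⟨zk, hzk, hzk0⟩ := h13.2.2.1
  set B : ℝ := max (max zh zk) 1 with hB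
  have hB1 : (1:ℝ) ≤ B := le_max_right _ _
  have hBpos : 0 < B := lt_of_lt_of_le one_pos hB1
  have hBzh : zh ≤ B := le_trans (le_max_left _ _) (le_max_left _ _)
  have hBzk : zk ≤ B := le_trans (le_max_right _ _) (le_max_left _ _)
  -- value at B is positive
  have hGB : 0 < tildeFn f12 B + tildeFn f13 (B + d) := by
    have h1 : 0 ≤ tildeFn f12 B := by
      rcases eq_or_lt_of_le hBzh with h | h
      · rw [← h, hzh0]
      · exact (memF_pos_of_gt h12 hzh hzh0 h).le
    have h2 : 0 < tildeFn f13 (B + d) :=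
      memF_pos_of_gt h13 hzk hzk0 (by linarith)
    linarith
  -- small point where value is negative
  obtain ⟨a, ha, ha1, haM⟩ := memF_small h12 (-(tildeFn f13 (B + d)))
  have haB : a < B := lt_of_lt_of_le ha1 hB1
  have hGa : tildeFn f12 a + tildeFn f13 (a + d) < 0 := by
    have : tildeFn f13 (a + d) ≤ tildeFn f13 (B + d) :=
      (memF_strictMono h13).monotoneOn (by simp [Set.mem_Ioi]; linarith)
        (by simp [Set.mem_Ioi]; linarith) (by linarith)
    linarith
  -- IVT
  have hcont : ContinuousOn (fun t => tildeFn f12 t + tildeFn f13 (t + d)) (Set.Icc a B) := by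
    apply ContinuousOn.add
    · exact (memF_contOn h12).mono (fun x hx => lt_of_lt_of_le ha hx.1)
    · exact ((memF_contOn h13).comp (continuousOn_id.add continuousOn_const)
        (fun x hx => by simp [Set.mem_Ioi]; nlinarith [hx.1]))
  have := intermediate_value_Icc haB.le hcont
  have h0 : (0:ℝ) ∈ Set.Icc (tildeFn f12 a + tildeFn f13 (a + d))
      (tildeFn f12 B + tildeFn f13 (B + d)) := ⟨hGa.le, hGB.le⟩
  obtain ⟨t, ht, ht0⟩ := this h0
  exact ⟨t, lt_of_lt_of_le ha ht.1, ht0⟩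

lemma case2_unique (h12 : MemF f12) (h13 : MemF f13) {d t t' : ℝ} (hd : 0 < d)
    (ht : 0 < t) (ht' : 0 < t')
    (he : tildeFn f12 t + tildeFn f13 (t + d) = 0)
    (he' : tildeFn f12 t' + tildeFn f13 (t' + d) = 0) : t = t' := by
  by_contra hne
  rcases lt_or_gt_of_ne hne with h | h
  · have h1 := memF_strictMono h12 (Set.mem_Ioi.2 ht) (Set.mem_Ioi.2 ht') h
    have h2 := memF_strictMono h13 (Set.mem_Ioi.2 (by linarith : (0:ℝ) < t + d))
      (Set.mem_Ioi.2 (by linarith : (0:ℝ) < t' + d)) (by linarith)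
    linarith
  · have h1 := memF_strictMono h12 (Set.mem_Ioi.2 ht') (Set.mem_Ioi.2 ht) h
    have h2 := memF_strictMono h13 (Set.mem_Ioi.2 (by linarith : (0:ℝ) < t' + d))
      (Set.mem_Ioi.2 (by linarith : (0:ℝ) < t + d)) (by linarith)
    linarith

lemma case2_spec (h12 : MemF f12) (h13 : MemF f13) {d : ℝ} (hd : 0 < d) :
    0 < case2d12 f12 f13 d ∧
      tildeFn f12 (case2d12 f12 f13 d) + tildeFn f13 (case2d12 f12 f13 d + d) = 0 :=
  Classical.epsilon_spec (case2_exists h12 h13 hd)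

lemma case2_mono13 (h12 : MemF f12) (h13 : MemF f13) {d1 d2 : ℝ} (hd1 : 0 < d1)
    (hd : d1 < d2) :
    case2d12 f12 f13 d1 + d1 < case2d12 f12 f13 d2 + d2 := by
  have hd2 : 0 < d2 := hd1.trans hd
  obtain ⟨hT1, hE1⟩ := case2_spec h12 h13 hd1
  obtain ⟨hT2, hE2⟩ := case2_spec h12 h13 hd2
  set t1 := case2d12 f12 f13 d1
  set t2 := case2d12 f12 f13 d2
  by_contra hcon
  push_neg at hcon
  have hk : tildeFn f13 (t2 + d2) ≤ tildeFn f13 (t1 + d1) := by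
    rcases eq_or_lt_of_le hcon with h | h
    · rw [h]
    · exact ((memF_strictMono h13) (by simp [Set.mem_Ioi]; linarith)
        (by simp [Set.mem_Ioi]; linarith) h).le
  have hh : tildeFn f12 t1 ≤ tildeFn f12 t2 := by linarith
  have ht12 : t1 ≤ t2 := by
    by_contra hcc
    push_neg at hcc
    have := memF_strictMono h12 (Set.mem_Ioi.2 hT2) (Set.mem_Ioi.2 hT1) hcc
    linarith
  linarith

lemma case2_anti (h12 : MemF f12) (h13 : MemF f13) {d1 d2 : ℝ} (hd1 : 0 < d1)
    (hd : d1 < d2) : case2d12 f12 f13 d2 < case2d12 f12 f13 d1 := by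
  have hd2 : 0 < d2 := hd1.trans hd
  obtain ⟨hT1, hE1⟩ := case2_spec h12 h13 hd1
  obtain ⟨hT2, hE2⟩ := case2_spec h12 h13 hd2
  set t1 := case2d12 f12 f13 d1
  set t2 := case2d12 f12 f13 d2
  by_contra hcon
  push_neg at hcon
  have hh : tildeFn f12 t1 ≤ tildeFn f12 t2 :=
    (memF_strictMono h12).monotoneOn (Set.mem_Ioi.2 hT1) (Set.mem_Ioi.2 hT2) hcon
  have hk : tildeFn f13 (t2 + d2) ≤ tildeFn f13 (t1 + d1) := by linarith
  have : t2 + d2 ≤ t1 + d1 := by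
    by_contra hcc
    push_neg at hcc
    have := memF_strictMono h13 (by simp [Set.mem_Ioi]; linarith)
      (by simp [Set.mem_Ioi]; linarith) hcc
    linarith
  linarith

lemma case2_continuousAt (h12 : MemF f12) (h13 : MemF f13) {d0 : ℝ} (hd0 : 0 < d0) :
    ContinuousAt (case2d12 f12 f13) d0 := by
  set T := case2d12 f12 f13
  obtain ⟨hT0, hE0⟩ := case2_spec h12 h13 hd0
  set t0 := T d0
  have hIoi : Set.Ioi (0:ℝ) ∈ 𝓝 d0 := Ioi_mem_nhds hd0
  rw [ContinuousAt]
  apply tendsto_order.2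
  constructor
  · intro a ha
    rcases le_or_gt a 0 with h | h
    · filter_upwards [hIoi] with d hd
      exact lt_of_le_of_lt h (case2_spec h12 h13 hd).1
    · -- a > 0, a < t0 : eventually G_d(a) < 0, hence a < T d
      have hga : tildeFn f12 a + tildeFn f13 (a + d0) < 0 := by
        have h1 := memF_strictMono h12 (Set.mem_Ioi.2 h) (Set.mem_Ioi.2 hT0) ha
        have h2 := memF_strictMono h13 (by simp [Set.mem_Ioi]; linarith)
          (by simp [Set.mem_Ioi]; linarith) (by linarith : a + d0 < t0 + d0)
        linarith
      have hcont : ContinuousAt (fun d => tildeFn f12 a + tildeFn f13 (a + d)) d0 := by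
        apply ContinuousAt.add continuousAt_const
        exact (memF_contAt h13 (by linarith)).comp (continuousAt_const.add continuousAt_id)
      have hev : ∀ᶠ d in 𝓝 d0, tildeFn f12 a + tildeFn f13 (a + d) < 0 :=
        hcont.eventually_lt continuousAt_const hga
      filter_upwards [hev, hIoi] with d hgd hd
      rw [Set.mem_Ioi] at hd
      obtain ⟨hTd, hEd⟩ := case2_spec h12 h13 hd
      by_contra hcc
      push_neg at hcc
      have : tildeFn f12 (T d) ≤ tildeFn f12 a :=
        (memF_strictMono h12).monotoneOn (Set.mem_Ioi.2 hTd) (Set.mem_Ioi.2 h) hcc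
      have : tildeFn f13 (T d + d) ≤ tildeFn f13 (a + d) :=
        (memF_strictMono h13).monotoneOn (by simp [Set.mem_Ioi]; linarith)
          (by simp [Set.mem_Ioi]; linarith) (by linarith)
      linarith
  · intro a ha
    have hapos : 0 < a := hT0.trans ha
    have hga : 0 < tildeFn f12 a + tildeFn f13 (a + d0) := by
      have h1 := memF_strictMono h12 (Set.mem_Ioi.2 hT0) (Set.mem_Ioi.2 hapos) ha
      have h2 := memF_strictMono h13 (by simp [Set.mem_Ioi]; linarith)
        (by simp [Set.mem_Ioi]; linarith) (by linarith : t0 + d0 < a + d0)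
      linarith
    have hcont : ContinuousAt (fun d => tildeFn f12 a + tildeFn f13 (a + d)) d0 := by
      apply ContinuousAt.add continuousAt_const
      exact (memF_contAt h13 (by linarith)).comp (continuousAt_const.add continuousAt_id)
    have hev : ∀ᶠ d in 𝓝 d0, 0 < tildeFn f12 a + tildeFn f13 (a + d) :=
      continuousAt_const.eventually_lt hcont hga
    filter_upwards [hev, hIoi] with d hgd hd
    rw [Set.mem_Ioi] at hd
    obtain ⟨hTd, hEd⟩ := case2_spec h12 h13 hd
    by_contra hcc
    push_neg at hcc
    have h1 : tildeFn f12 a ≤ tildeFn f12 (T d) :=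
      (memF_strictMono h12).monotoneOn (Set.mem_Ioi.2 hapos) (Set.mem_Ioi.2 hTd) hcc
    have h2 : tildeFn f13 (a + d) ≤ tildeFn f13 (T d + d) :=
      (memF_strictMono h13).monotoneOn (by simp [Set.mem_Ioi]; linarith)
        (by simp [Set.mem_Ioi]; linarith) (by linarith)
    linarith

end Chunk2

noncomputable section
def inv13 (f13 : ℝ → ℝ) (y : ℝ) : ℝ :=
  Classical.epsilon fun s => 0 < s ∧ tildeFn f13 s = y
end

section Chunk3
variable {f12 f13 : ℝ → ℝ}

lemma inv13_eq (h13 : MemF f13) {s y : ℝ} (hs : 0 < s) (he : tildeFn f13 s = y) :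
    inv13 f13 y = s := by
  have hspec : 0 < inv13 f13 y ∧ tildeFn f13 (inv13 f13 y) = y :=
    Classical.epsilon_spec (⟨s, hs, he⟩ : ∃ s, 0 < s ∧ tildeFn f13 s = y)
  exact (memF_strictMono h13).injOn (Set.mem_Ioi.2 hspec.1) (Set.mem_Ioi.2 hs)
    (by rw [hspec.2, he])

lemma inv13_local (h13 : MemF f13) {s0 : ℝ} (hs0 : 0 < s0) :
    ∀ᶠ y in 𝓝 (tildeFn f13 s0), 0 < inv13 f13 y ∧ tildeFn f13 (inv13 f13 y) = y := by
  set k := tildeFn f13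
  have hlo : 0 < s0 / 2 := by linarith
  have h1 : k (s0/2) < k s0 := memF_strictMono h13 (Set.mem_Ioi.2 hlo)
    (Set.mem_Ioi.2 hs0) (by linarith)
  have h2 : k s0 < k (s0+1) := memF_strictMono h13 (Set.mem_Ioi.2 hs0)
    (Set.mem_Ioi.2 (by linarith)) (by linarith)
  have hmem : Set.Ioo (k (s0/2)) (k (s0+1)) ∈ 𝓝 (k s0) :=
    Ioo_mem_nhds h1 h2
  filter_upwards [hmem] with y hy
  have hcont : ContinuousOn k (Set.Icc (s0/2) (s0+1)) :=
    (memF_contOn h13).mono (fun x hx => lt_of_lt_of_le hlo hx.1)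
  have := intermediate_value_Icc (by linarith : s0/2 ≤ s0+1) hcont
  obtain ⟨s, hsmem, hse⟩ := this ⟨hy.1.le, hy.2.le⟩
  exact Classical.epsilon_spec (⟨s, lt_of_lt_of_le hlo hsmem.1, hse⟩ :
    ∃ s, 0 < s ∧ k s = y)

lemma inv13_contAt (h13 : MemF f13) {s0 : ℝ} (hs0 : 0 < s0) :
    ContinuousAt (inv13 f13) (tildeFn f13 s0) := by
  set k := tildeFn f13
  have hloc := inv13_local h13 hs0
  have hinv0 : inv13 f13 (k s0) = s0 := inv13_eq h13 hs0 rfl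
  rw [ContinuousAt, hinv0]
  apply tendsto_order.2
  constructor
  · intro a ha
    rcases le_or_gt a 0 with h | h
    · filter_upwards [hloc] with y hy
      exact lt_of_le_of_lt h hy.1
    · have hka : k a < k s0 := memF_strictMono h13 (Set.mem_Ioi.2 h)
        (Set.mem_Ioi.2 hs0) ha
      filter_upwards [hloc, Ioi_mem_nhds hka] with y hy hya
      by_contra hcc
      push_neg at hcc
      have hy2 : k (inv13 f13 y) = y := hy.2
      have : k (inv13 f13 y) ≤ k a :=
        (memF_strictMono h13).monotoneOn (Set.mem_Ioi.2 hy.1) (Set.mem_Ioi.2 h) hcc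
      rw [hy2] at this
      exact absurd hya (by simp [Set.mem_Ioi]; linarith)
  · intro a ha
    have hapos : 0 < a := hs0.trans ha
    have hka : k s0 < k a := memF_strictMono h13 (Set.mem_Ioi.2 hs0)
      (Set.mem_Ioi.2 hapos) ha
    filter_upwards [hloc, Iio_mem_nhds hka] with y hy hya
    by_contra hcc
    push_neg at hcc
    have hy2 : k (inv13 f13 y) = y := hy.2
    have : k a ≤ k (inv13 f13 y) :=
      (memF_strictMono h13).monotoneOn (Set.mem_Ioi.2 hapos) (Set.mem_Ioi.2 hy.1) hcc
    rw [hy2] at this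
    exact absurd hya (by simp [Set.mem_Iio]; linarith)

lemma inv13_hasDerivAt (h13 : MemF f13) {s0 : ℝ} (hs0 : 0 < s0) :
    HasDerivAt (inv13 f13) (deriv (tildeFn f13) s0)⁻¹ (tildeFn f13 s0) := by
  have hinv0 : inv13 f13 (tildeFn f13 s0) = s0 := inv13_eq h13 hs0 rfl
  apply HasDerivAt.of_local_left_inverse (inv13_contAt h13 hs0)
  · rw [hinv0]
    exact (memF_diffAt h13 hs0).hasDerivAt
  · exact ne_of_gt (h13.2.1 s0 hs0)
  · filter_upwards [inv13_local h13 hs0] with y hy using hy.2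

/-- Derivative of the case-2 balanced distance. -/
lemma case2_hasDerivAt (h12 : MemF f12) (h13 : MemF f13) {d0 : ℝ} (hd0 : 0 < d0) :
    HasDerivAt (case2d12 f12 f13)
      (((deriv (tildeFn f13) (case2d12 f12 f13 d0 + d0))⁻¹ *
        (-(deriv (tildeFn f12) (case2d12 f12 f13 d0))) - 1)⁻¹) d0 := by
  obtain ⟨hT0, hE0⟩ := case2_spec h12 h13 hd0
  set T := case2d12 f12 f13 with hTdef
  set t0 := T d0 with ht0def
  have hs0 : 0 < t0 + d0 := by linarith
  have hy0 : tildeFn f13 (t0 + d0) = -(tildeFn f12 t0) := by linarith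
  set θ' : ℝ := (deriv (tildeFn f13) (t0 + d0))⁻¹ * (-(deriv (tildeFn f12) t0)) - 1
    with hθdef
  have hk' : 0 < deriv (tildeFn f13) (t0 + d0) := h13.2.1 _ hs0
  have hh' : 0 < deriv (tildeFn f12) t0 := h12.2.1 _ hT0
  have hθneg : θ' < 0 := by
    have : (deriv (tildeFn f13) (t0 + d0))⁻¹ * (-(deriv (tildeFn f12) t0)) < 0 :=
      mul_neg_of_pos_of_neg (inv_pos.2 hk') (by linarith)
    rw [hθdef]; linarith
  have hΘderiv : HasDerivAt (fun t => inv13 f13 (-(tildeFn f12 t)) - t) θ' t0 := by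
    have hinner : HasDerivAt (fun t => -(tildeFn f12 t)) (-(deriv (tildeFn f12) t0)) t0 :=
      (memF_diffAt h12 hT0).hasDerivAt.neg
    have houter : HasDerivAt (inv13 f13) (deriv (tildeFn f13) (t0 + d0))⁻¹
        (-(tildeFn f12 t0)) := by
      have := inv13_hasDerivAt h13 hs0
      rwa [hy0] at this
    have hcomp := HasDerivAt.comp t0 houter hinner
    have := hcomp.sub (hasDerivAt_id t0)
    simpa [hθdef, mul_comm, Function.comp_def, Pi.sub_def] using this
  apply HasDerivAt.of_local_left_inverse (case2_continuousAt h12 h13 hd0) hΘderiv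
    (ne_of_lt hθneg)
  filter_upwards [Ioi_mem_nhds hd0] with d hd
  rw [Set.mem_Ioi] at hd
  obtain ⟨hTd, hEd⟩ := case2_spec h12 h13 hd
  have : inv13 f13 (-(tildeFn f12 (T d))) = T d + d :=
    inv13_eq h13 (by linarith) (by linarith)
  rw [this]; ring

end Chunk3

section Chunk4
variable {f12 f13 : ℝ → ℝ}

lemma aux_inv_gt_neg_one {x : ℝ} (hx : x < -1) : -1 < x⁻¹ := by
  by_contra hcc
  push_neg at hcc
  have hne : x ≠ 0 := by linarith
  have h2 : x * x⁻¹ = 1 := mul_inv_cancel₀ hne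
  have h4 : (-x) * 1 ≤ (-x) * (-x⁻¹) :=
    mul_le_mul_of_nonneg_left (by linarith) (by linarith)
  have h5 : (-x) * (-x⁻¹) = 1 := by rw [neg_mul_neg]; exact h2
  rw [h5, mul_one] at h4
  linarith

lemma case2_contOn (h12 : MemF f12) (h13 : MemF f13) :
    ContinuousOn (case2d12 f12 f13) (Set.Ioi 0) :=
  fun d hd => (case2_continuousAt h12 h13 (Set.mem_Ioi.1 hd)).continuousWithinAt

lemma case2_contDiffOn (h12 : MemF f12) (h13 : MemF f13) :
    ContDiffOn ℝ 1 (case2d12 f12 f13) (Set.Ioi 0) := by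
  set T := case2d12 f12 f13
  have key : (1 : WithTop ℕ∞) = 0 + 1 := by norm_num
  rw [key, contDiffOn_succ_iff_deriv_of_isOpen isOpen_Ioi]
  refine ⟨fun d hd => (case2_hasDerivAt h12 h13 (Set.mem_Ioi.1 hd)).differentiableAt.differentiableWithinAt, ?_, ?_⟩
  · intro h; exact absurd h (by norm_num)
  · rw [contDiffOn_zero]
    have hform : ContinuousOn (fun d => ((deriv (tildeFn f13) (T d + d))⁻¹ *
        (-(deriv (tildeFn f12) (T d))) - 1)⁻¹) (Set.Ioi 0) := by
      have c0 : ContinuousOn (fun d : ℝ => T d + d) (Set.Ioi 0) :=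
        (case2_contOn h12 h13).add continuousOn_id
      have c1 : ContinuousOn (fun d => deriv (tildeFn f13) (T d + d)) (Set.Ioi 0) :=
        (memF_derivContOn h13).comp c0 (fun d hd => by
          have := (case2_spec h12 h13 (Set.mem_Ioi.1 hd)).1
          simp only [Set.mem_Ioi] at *; linarith)
      have c2 : ContinuousOn (fun d => deriv (tildeFn f12) (T d)) (Set.Ioi 0) :=
        (memF_derivContOn h12).comp (case2_contOn h12 h13) (fun d hd => by
          exact Set.mem_Ioi.2 (case2_spec h12 h13 (Set.mem_Ioi.1 hd)).1)
      have c3 : ContinuousOn (fun d => (deriv (tildeFn f13) (T d + d))⁻¹ *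
          (-(deriv (tildeFn f12) (T d))) - 1) (Set.Ioi 0) := by
        apply ContinuousOn.sub _ continuousOn_const
        apply ContinuousOn.mul _ c2.neg
        apply c1.inv₀
        intro d hd
        have hT := (case2_spec h12 h13 (Set.mem_Ioi.1 hd)).1
        exact ne_of_gt (h13.2.1 _ (by rw [Set.mem_Ioi] at hd; linarith))
      apply c3.inv₀
      intro d hd
      rw [Set.mem_Ioi] at hd
      have hT := (case2_spec h12 h13 hd).1
      have hk' : 0 < deriv (tildeFn f13) (T d + d) := h13.2.1 _ (by linarith)
      have hh' : 0 < deriv (tildeFn f12) (T d) := h12.2.1 _ hT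
      have : (deriv (tildeFn f13) (T d + d))⁻¹ * (-(deriv (tildeFn f12) (T d))) < 0 :=
        mul_neg_of_pos_of_neg (inv_pos.2 hk') (by linarith)
      intro hcc
      rw [sub_eq_zero] at hcc
      · linarith [hcc]
    apply hform.congr
    intro d hd
    exact (case2_hasDerivAt h12 h13 (Set.mem_Ioi.1 hd)).deriv

lemma g23_contDiffOn (h12 : MemF f12) (h13 : MemF f13) :
    ContDiffOn ℝ 1 (g23Case2 f12 f13) (Set.Ioi 0) := by
  have hTd : ContDiffOn ℝ 1 (fun d => case2d12 f12 f13 d + d) (Set.Ioi 0) :=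
    (case2_contDiffOn h12 h13).add contDiff_id.contDiffOn
  have hcomp : ContDiffOn ℝ 1 (fun d => tildeFn f13 (case2d12 f12 f13 d + d))
      (Set.Ioi 0) :=
    (memF_contDiffOn h13).comp hTd (fun d hd => by
      have := (case2_spec h12 h13 (Set.mem_Ioi.1 hd)).1
      rw [Set.mem_Ioi] at *; linarith)
  have := hcomp.div (contDiff_id.contDiffOn (n := 1))
    (fun d hd => ne_of_gt (Set.mem_Ioi.1 hd))
  exact this

/-- Derivative positivity for `S d = f̃₁₃(d₁₂(d)+d)`. -/
lemma g23tilde_deriv_pos (h12 : MemF f12) (h13 : MemF f13) {d0 : ℝ} (hd0 : 0 < d0) :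
    ∃ S' : ℝ, HasDerivAt (fun d => tildeFn f13 (case2d12 f12 f13 d + d)) S' d0 ∧
      0 < S' := by
  obtain ⟨hT0, hE0⟩ := case2_spec h12 h13 hd0
  set T := case2d12 f12 f13
  set t0 := T d0
  have hs0 : 0 < t0 + d0 := by linarith
  set k' := deriv (tildeFn f13) (t0 + d0) with hk'def
  set h' := deriv (tildeFn f12) t0 with hh'def
  have hk' : 0 < k' := h13.2.1 _ hs0
  have hh' : 0 < h' := h12.2.1 _ hT0
  set θ' : ℝ := k'⁻¹ * (-h') - 1 with hθdef
  have hθlt : θ' < -1 := by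
    have : k'⁻¹ * (-h') < 0 := mul_neg_of_pos_of_neg (inv_pos.2 hk') (by linarith)
    rw [hθdef]; linarith
  have hθne : θ' ≠ 0 := by intro h; rw [h] at hθlt; linarith
  have hinvneg : θ'⁻¹ < 0 := inv_lt_zero.2 (by linarith)
  have ht' : -1 < θ'⁻¹ := aux_inv_gt_neg_one hθlt
  have hTineq : HasDerivAt T θ'⁻¹ d0 := case2_hasDerivAt h12 h13 hd0
  have hinner : HasDerivAt (fun d => T d + d) (θ'⁻¹ + 1) d0 :=
    hTineq.add (hasDerivAt_id d0)
  have houter : HasDerivAt (tildeFn f13) k' ((fun d => T d + d) d0) :=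
    (memF_diffAt h13 hs0).hasDerivAt
  refine ⟨k' * (θ'⁻¹ + 1), ?_, ?_⟩
  · have hcomp : HasDerivAt ((tildeFn f13) ∘ (fun d => T d + d)) (k' * (θ'⁻¹ + 1)) d0 := by
      apply HasDerivAt.comp d0 _ hinner
      exact houter
    exact hcomp
  · have : 0 < θ'⁻¹ + 1 := by linarith
    positivity

end Chunk4

/-- for the case-2 virtual interaction `g₂₃` induced by `f₁₂, f₁₃ ∈ 𝓕`,
the sum `f + g₂₃` lies in `𝓕` for every `f ∈ 𝓕`. -/
theorem statement11 (f12 f13 : ℝ → ℝ) (h12 : MemF f12) (h13 : MemF f13) :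
    ∀ f : ℝ → ℝ, MemF f → MemF (fun d => f d + g23Case2 f12 f13 d) := by
  intro f hf
  have hpt : ∀ d : ℝ, 0 < d →
      tildeFn (fun x => f x + g23Case2 f12 f13 x) d
        = tildeFn f d + tildeFn f13 (case2d12 f12 f13 d + d) := by
    intro d hd
    show d * (f d + tildeFn f13 (case2d12 f12 f13 d + d) / d)
      = d * f d + tildeFn f13 (case2d12 f12 f13 d + d)
    field_simp
  have hmapsTo : ∀ d ∈ Set.Ioi (0:ℝ), case2d12 f12 f13 d + d ∈ Set.Ioi (0:ℝ) := by
    intro d hd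
    rw [Set.mem_Ioi] at *
    have := (case2_spec h12 h13 hd).1
    linarith
  have hScont : ContinuousOn (fun d => tildeFn f13 (case2d12 f12 f13 d + d))
      (Set.Ioi 0) :=
    (memF_contOn h13).comp ((case2_contOn h12 h13).add continuousOn_id) hmapsTo
  refine ⟨hf.1.add (g23_contDiffOn h12 h13), ?_, ?_, ?_⟩
  · -- positivity of the derivative
    intro d hd
    obtain ⟨S', hSd, hSpos⟩ := g23tilde_deriv_pos h12 h13 hd
    have heq : tildeFn (fun x => f x + g23Case2 f12 f13 x) =ᶠ[𝓝 d]
        fun x => tildeFn f x + tildeFn f13 (case2d12 f12 f13 x + x) := by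
      filter_upwards [Ioi_mem_nhds hd] with x hx
      exact hpt x (Set.mem_Ioi.1 hx)
    rw [heq.deriv_eq]
    have hFd : HasDerivAt (tildeFn f) (deriv (tildeFn f) d) d :=
      (memF_diffAt hf hd).hasDerivAt
    rw [HasDerivAt.deriv (f := fun x => tildeFn f x + tildeFn f13 (case2d12 f12 f13 x + x)) (hFd.add hSd)]
    have := hf.2.1 d hd
    linarith
  · -- existence of a zero
    obtain ⟨zf, hzf, hzf0⟩ := hf.2.2.1
    obtain ⟨zk, hzk, hzk0⟩ := h13.2.2.1
    have hT1 := (case2_spec h12 h13 one_pos).1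
    set Chi : ℝ := tildeFn f13 (case2d12 f12 f13 1 + 1) with hChi
    obtain ⟨dlo, hdlo, hdlo1, hdloM⟩ := memF_small hf (-Chi)
    set dhi : ℝ := max zf zk + 1 with hdhi
    have hdhi1 : 1 < dhi := by
      have : 0 < max zf zk := lt_max_iff.2 (Or.inl hzf)
      rw [hdhi]; linarith
    have hdlohi : dlo < dhi := hdlo1.trans hdhi1
    have hdhipos : 0 < dhi := lt_trans one_pos hdhi1
    -- φ dlo < 0
    have hTmono := case2_mono13 h12 h13 hdlo hdlo1
    have hSlo : tildeFn f13 (case2d12 f12 f13 dlo + dlo) < Chi := by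
      apply memF_strictMono h13 (hmapsTo dlo (Set.mem_Ioi.2 hdlo))
        (hmapsTo 1 (Set.mem_Ioi.2 one_pos)) hTmono
    have hlo : tildeFn f dlo + tildeFn f13 (case2d12 f12 f13 dlo + dlo) < 0 := by
      linarith
    -- φ dhi > 0
    have hThi := (case2_spec h12 h13 hdhipos).1
    have hhi : 0 < tildeFn f dhi + tildeFn f13 (case2d12 f12 f13 dhi + dhi) := by
      have h1 : 0 < tildeFn f dhi := memF_pos_of_gt hf hzf hzf0
        (by rw [hdhi]; have := le_max_left zf zk; linarith)
      have h2 : 0 < tildeFn f13 (case2d12 f12 f13 dhi + dhi) :=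
        memF_pos_of_gt h13 hzk hzk0
          (by have := le_max_right zf zk; rw [hdhi] at *; linarith)
      linarith
    -- IVT
    have hcont : ContinuousOn
        (fun d => tildeFn f d + tildeFn f13 (case2d12 f12 f13 d + d))
        (Set.Icc dlo dhi) := by
      apply ContinuousOn.add
      · exact (memF_contOn hf).mono (fun x hx => lt_of_lt_of_le hdlo hx.1)
      · exact hScont.mono (fun x hx => lt_of_lt_of_le hdlo hx.1)
    obtain ⟨z, hzmem, hz0⟩ := intermediate_value_Icc hdlohi.le hcont ⟨hlo.le, hhi.le⟩
    refine ⟨z, lt_of_lt_of_le hdlo hzmem.1, ?_⟩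
    rw [hpt z (lt_of_lt_of_le hdlo hzmem.1)]
    exact hz0
  · -- divergence of the potential integral
    have hT1 := (case2_spec h12 h13 one_pos).1
    set Chi : ℝ := tildeFn f13 (case2d12 f12 f13 1 + 1) with hChi
    apply tendsto_atBot_mono' (𝓝[>] (0:ℝ))
      (f₁ := fun d => (∫ x in d..(1:ℝ), tildeFn f x) + |Chi|)
    · filter_upwards [Ioo_mem_nhdsGT_of_mem
        (by constructor <;> norm_num : (0:ℝ) ∈ Set.Ico (0:ℝ) 1)] with d hd
      obtain ⟨hd0, hd1⟩ := hd
      have hsub : Set.uIcc d 1 ⊆ Set.Ioi 0 := by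
        rw [Set.uIcc_of_le hd1.le]
        exact fun x hx => lt_of_lt_of_le hd0 hx.1
      have hintF : IntervalIntegrable (tildeFn f) MeasureTheory.volume d 1 :=
        ((memF_contOn hf).mono hsub).intervalIntegrable
      have hintS : IntervalIntegrable
          (fun x => tildeFn f13 (case2d12 f12 f13 x + x)) MeasureTheory.volume d 1 :=
        (hScont.mono hsub).intervalIntegrable
      have hcongr : (∫ x in d..(1:ℝ), tildeFn (fun y => f y + g23Case2 f12 f13 y) x)
          = ∫ x in d..(1:ℝ), (tildeFn f x + tildeFn f13 (case2d12 f12 f13 x + x)) := by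
        apply intervalIntegral.integral_congr
        intro x hx
        exact hpt x (hsub hx)
      rw [hcongr, intervalIntegral.integral_add hintF hintS]
      have hSbound : (∫ x in d..(1:ℝ), tildeFn f13 (case2d12 f12 f13 x + x)) ≤ |Chi| := by
        have hmono : (∫ x in d..(1:ℝ), tildeFn f13 (case2d12 f12 f13 x + x))
            ≤ ∫ _x in d..(1:ℝ), Chi := by
          apply intervalIntegral.integral_mono_on hd1.le hintS intervalIntegrable_const
          intro x hx
          have hx0 : 0 < x := lt_of_lt_of_le hd0 hx.1
          rcases lt_or_eq_of_le hx.2 with h1 | h1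
          · exact (memF_strictMono h13 (hmapsTo x (Set.mem_Ioi.2 hx0))
              (hmapsTo 1 (Set.mem_Ioi.2 one_pos)) (case2_mono13 h12 h13 hx0 h1)).le
          · rw [h1]
        rw [intervalIntegral.integral_const, smul_eq_mul] at hmono
        have h2 : (1 - d) * Chi ≤ |Chi| := by
          have h3 : Chi ≤ |Chi| := le_abs_self Chi
          have h4 : -|Chi| ≤ Chi := neg_abs_le Chi
          nlinarith [abs_nonneg Chi]
        linarith
      linarith
    · exact tendsto_atBot_add_const_right _ (|Chi|) hf.2.2.2
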